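/- Let A and P be real d×n matrices, let k ≥ 1, suppose P has rank at most k, and suppose s_k(A) > 0, where s_t(A) denotes the t-th largest singular value of A. Let v_1,…,v_k be orthonormal vectors in ℝ^d with A·Aᵀ·v_t = s_t(A)²·v_t for t = 1,…,k (top k left singular vectors of A). Then sinΘ(span{v_1,…,v_k}, columnspace(P)) ≤ ‖A−P‖/s_k(A), where ‖·‖ is the spectral norm. -/

import Mathlib

open Matrix

noncomputable def col {d k : ℕ} (M : Matrix (Fin d) (Fin k) ℝ) (ℓ : Fin k) :
    EuclideanSpace ℝ (Fin d) := WithLp.toLp 2 (fun i => M i ℓ)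

noncomputable def specNorm {d n : ℕ} (B : Matrix (Fin d) (Fin n) ℝ) : ℝ :=
  ‖LinearMap.toContinuousLinearMap (Matrix.toEuclideanLin B)‖

/-- The `t`-th largest singular value (1-indexed), via the Courant–Fischer
characterization. -/
noncomputable def singularValue {d n : ℕ} (B : Matrix (Fin d) (Fin n) ℝ) (t : ℕ) : ℝ :=
  ⨆ V : {V : Submodule ℝ (EuclideanSpace ℝ (Fin n)) // Module.finrank ℝ V = t},
    ⨅ x : {x : EuclideanSpace ℝ (Fin n) // x ∈ V.1 ∧ ‖x‖ = 1},
      ‖Matrix.toEuclideanLin B x.1‖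

noncomputable def sinTheta {d : ℕ}
    (F F' : Submodule ℝ (EuclideanSpace ℝ (Fin d))) : ℝ :=
  ⨆ u : {u : EuclideanSpace ℝ (Fin d) // u ∈ F ∧ ‖u‖ = 1},
    ⨅ v : {v : EuclideanSpace ℝ (Fin d) // v ∈ F'}, ‖u.1 - v.1‖

lemma sv_nonneg {d n : ℕ} (B : Matrix (Fin d) (Fin n) ℝ) (t : ℕ) :
    0 ≤ singularValue B t :=
  Real.iSup_nonneg fun _ => Real.iInf_nonneg fun _ => norm_nonneg _

lemma exists_unit {n : ℕ} (V : Submodule ℝ (EuclideanSpace ℝ (Fin n)))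
    (h : 0 < Module.finrank ℝ V) : ∃ x : EuclideanSpace ℝ (Fin n), x ∈ V ∧ ‖x‖ = 1 := by
  have : Nontrivial V := Module.nontrivial_of_finrank_pos h
  obtain ⟨x, hx⟩ := exists_ne (0 : V)
  have hx0 : (x : EuclideanSpace ℝ (Fin n)) ≠ 0 := fun h' => hx (Subtype.ext h')
  refine ⟨‖(x : EuclideanSpace ℝ (Fin n))‖⁻¹ • (x : EuclideanSpace ℝ (Fin n)),
    V.smul_mem _ x.2, ?_⟩
  rw [norm_smul, norm_inv, norm_norm, inv_mul_cancel₀ (norm_ne_zero_iff.mpr hx0)]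

lemma inf_bddBelow {d n : ℕ} (B : Matrix (Fin d) (Fin n) ℝ)
    (V : Submodule ℝ (EuclideanSpace ℝ (Fin n))) :
    BddBelow (Set.range fun x : {x : EuclideanSpace ℝ (Fin n) // x ∈ V ∧ ‖x‖ = 1} =>
      ‖Matrix.toEuclideanLin B x.1‖) :=
  ⟨0, Set.forall_mem_range.2 fun _ => norm_nonneg _⟩

lemma inf_le_specNorm {d n : ℕ} (B : Matrix (Fin d) (Fin n) ℝ)
    (V : Submodule ℝ (EuclideanSpace ℝ (Fin n))) (h : 0 < Module.finrank ℝ V) :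
    (⨅ x : {x : EuclideanSpace ℝ (Fin n) // x ∈ V ∧ ‖x‖ = 1},
      ‖Matrix.toEuclideanLin B x.1‖) ≤ specNorm B := by
  obtain ⟨x, hxV, hx1⟩ := exists_unit V h
  refine le_trans (ciInf_le (inf_bddBelow B V) ⟨x, hxV, hx1⟩) ?_
  have := (LinearMap.toContinuousLinearMap (Matrix.toEuclideanLin B)).le_opNorm x
  simpa [specNorm, LinearMap.coe_toContinuousLinearMap', hx1] using this

lemma sup_bddAbove {d n : ℕ} (B : Matrix (Fin d) (Fin n) ℝ) {t : ℕ} (ht : 1 ≤ t) :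
    BddAbove (Set.range fun V : {V : Submodule ℝ (EuclideanSpace ℝ (Fin n)) //
        Module.finrank ℝ V = t} =>
      ⨅ x : {x : EuclideanSpace ℝ (Fin n) // x ∈ V.1 ∧ ‖x‖ = 1},
        ‖Matrix.toEuclideanLin B x.1‖) := by
  refine ⟨specNorm B, Set.forall_mem_range.2 fun V => ?_⟩
  exact inf_le_specNorm B V.1 (by rw [V.2]; exact ht)

lemma sv_antitone {d n : ℕ} (B : Matrix (Fin d) (Fin n) ℝ) {j t : ℕ}
    (hj : 1 ≤ j) (hjt : j ≤ t) : singularValue B t ≤ singularValue B j := by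
  refine Real.iSup_le (fun V => ?_) (sv_nonneg B j)
  -- construct a subspace W ≤ V of finrank j
  have hle : j ≤ Module.finrank ℝ V.1 := by rw [V.2]; exact hjt
  obtain ⟨f, hf⟩ := exists_linearIndependent_of_le_finrank hle
  have hg : LinearIndependent ℝ ((V.1.subtype) ∘ f) :=
    hf.map' V.1.subtype (Submodule.ker_subtype V.1)
  set W : Submodule ℝ (EuclideanSpace ℝ (Fin n)) :=
    Submodule.span ℝ (Set.range ((V.1.subtype) ∘ f)) with hW
  have hWrank : Module.finrank ℝ W = j := by
    rw [hW, finrank_span_eq_card hg, Fintype.card_fin]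
  have hWV : W ≤ V.1 := by
    rw [hW, Submodule.span_le]
    rintro _ ⟨i, rfl⟩
    exact (f i).2
  have hne : Nonempty {x : EuclideanSpace ℝ (Fin n) // x ∈ W ∧ ‖x‖ = 1} := by
    obtain ⟨x, hx⟩ := exists_unit W (hWrank ▸ hj)
    exact ⟨⟨x, hx⟩⟩
  have h1 : (⨅ x : {x : EuclideanSpace ℝ (Fin n) // x ∈ V.1 ∧ ‖x‖ = 1},
      ‖Matrix.toEuclideanLin B x.1‖) ≤
      ⨅ x : {x : EuclideanSpace ℝ (Fin n) // x ∈ W ∧ ‖x‖ = 1},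
      ‖Matrix.toEuclideanLin B x.1‖ := by
    refine le_ciInf fun x => ciInf_le (inf_bddBelow B V.1) ⟨x.1, hWV x.2.1, x.2.2⟩
  refine h1.trans ?_
  exact le_ciSup (sup_bddAbove B hj) (⟨W, hWrank⟩ :
    {V : Submodule ℝ (EuclideanSpace ℝ (Fin n)) // Module.finrank ℝ V = j})

set_option maxHeartbeats 1000000 in
theorem stmt4 {d n k : ℕ} (hk : 1 ≤ k)
    (A P : Matrix (Fin d) (Fin n) ℝ)
    (hrank : P.rank ≤ k)
    (hs : 0 < singularValue A k)
    (v : Fin k → EuclideanSpace ℝ (Fin d))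
    (hortho : Orthonormal ℝ v)
    (heig : ∀ t : Fin k,
      Matrix.toEuclideanLin (A * Aᵀ) (v t) = (singularValue A (t.1 + 1)) ^ 2 • v t) :
    sinTheta (Submodule.span ℝ (Set.range v))
        (Submodule.span ℝ (Set.range (col P)))
      ≤ specNorm (A - P) / singularValue A k := by
  set σ : ℝ := singularValue A k with hσ
  set ε : ℝ := specNorm (A - P) with hε
  have hε0 : 0 ≤ ε := norm_nonneg _
  refine Real.iSup_le ?_ (div_nonneg hε0 hs.le)
  rintro ⟨u, hu, hu1⟩
  obtain ⟨c, hc⟩ := (Submodule.mem_span_range_iff_exists_fun ℝ).mp hu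
  set s : Fin k → ℝ := fun t => singularValue A (t.1 + 1) with hsdef
  have hst : ∀ t, σ ≤ s t := fun t =>
    sv_antitone A (Nat.succ_le_succ (Nat.zero_le _)) (Nat.succ_le_of_lt t.2)
  have hspos : ∀ t, 0 < s t := fun t => hs.trans_le (hst t)
  set L : EuclideanSpace ℝ (Fin n) →ₗ[ℝ] EuclideanSpace ℝ (Fin d) :=
    Matrix.toEuclideanLin A with hL
  set L' : EuclideanSpace ℝ (Fin d) →ₗ[ℝ] EuclideanSpace ℝ (Fin n) :=
    Matrix.toEuclideanLin Aᵀ with hL'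
  have hAAT : ∀ x, Matrix.toEuclideanLin (A * Aᵀ) x = L (L' x) := by
    intro x
    simp [hL, hL', Matrix.toEuclideanLin_apply, Matrix.mulVec_mulVec]
  set z : EuclideanSpace ℝ (Fin d) := ∑ t, ((c t) / (s t) ^ 2) • v t with hz
  set w : EuclideanSpace ℝ (Fin n) := L' z with hwdef
  have hLw : L w = u := by
    rw [hwdef, ← hAAT z, hz, map_sum]
    rw [← hc]
    refine Finset.sum_congr rfl fun t _ => ?_
    rw [LinearMap.map_smul, heig t, smul_smul, div_mul_cancel₀]
    exact pow_ne_zero _ (hspos t).ne'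
  have hadj : L' = LinearMap.adjoint L := by
    rw [hL', hL, ← Matrix.conjTranspose_eq_transpose_of_trivial]
    exact Matrix.toEuclideanLin_conjTranspose_eq_adjoint A
  have hzu : (inner ℝ z u : ℝ) = ∑ t, (c t) ^ 2 / (s t) ^ 2 := by
    rw [hz, ← hc]
    rw [hortho.inner_sum]
    refine Finset.sum_congr rfl fun t _ => ?_
    simp only [conj_trivial]
    ring
  have hw2 : ‖w‖ ^ 2 = ∑ t, (c t) ^ 2 / (s t) ^ 2 := by
    rw [← real_inner_self_eq_norm_sq, hwdef, hadj, LinearMap.adjoint_inner_left,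
      ← hadj, ← hwdef, hLw, hzu]
  have hsum1 : ∑ t, (c t) ^ 2 = 1 := by
    have h1 : (inner ℝ u u : ℝ) = ∑ t, (c t) ^ 2 := by
      rw [← hc, hortho.inner_sum]
      simp [pow_two]
    have h2 : (inner ℝ u u : ℝ) = 1 := by
      rw [real_inner_self_eq_norm_sq, hu1, one_pow]
    rw [← h1, h2]
  have hwle : ‖w‖ ≤ σ⁻¹ := by
    have hb : ‖w‖ ^ 2 ≤ (σ⁻¹) ^ 2 := by
      rw [hw2]
      have : ∀ t : Fin k, (c t) ^ 2 / (s t) ^ 2 ≤ (c t) ^ 2 / σ ^ 2 := fun t =>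
        div_le_div_of_nonneg_left (sq_nonneg _) (pow_pos hs 2)
          (pow_le_pow_left₀ hs.le (hst t) 2)
      calc ∑ t, (c t) ^ 2 / (s t) ^ 2 ≤ ∑ t, (c t) ^ 2 / σ ^ 2 :=
            Finset.sum_le_sum fun t _ => this t
        _ = (∑ t, (c t) ^ 2) / σ ^ 2 := by rw [Finset.sum_div]
        _ = (σ⁻¹) ^ 2 := by rw [hsum1, inv_pow, one_div]
    have := Real.sqrt_le_sqrt hb
    rwa [Real.sqrt_sq (norm_nonneg _), Real.sqrt_sq (inv_nonneg.mpr hs.le)] at this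
  -- the approximating vector
  set p : EuclideanSpace ℝ (Fin d) := Matrix.toEuclideanLin P w with hp
  have hpmem : p ∈ Submodule.span ℝ (Set.range (_root_.col P)) := by
    have hrepr : p = ∑ ℓ : Fin n, (WithLp.equiv 2 (Fin n → ℝ) w ℓ) • _root_.col P ℓ := by
      apply (WithLp.linearEquiv 2 ℝ (Fin d → ℝ)).injective
      rw [map_sum]
      have hlhs : (WithLp.linearEquiv 2 ℝ (Fin d → ℝ)) p
          = P *ᵥ (WithLp.equiv 2 (Fin n → ℝ) w) := rfl
      rw [hlhs]
      funext i
      rw [Finset.sum_apply]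
      simp [Matrix.mulVec, dotProduct, _root_.col, WithLp.linearEquiv, mul_comm]
    rw [hrepr]
    exact Submodule.sum_mem _ fun ℓ _ => Submodule.smul_mem _ _
      (Submodule.subset_span (Set.mem_range_self ℓ))
  have hdist : ‖u - p‖ ≤ ε * σ⁻¹ := by
    have h1 : u - p = Matrix.toEuclideanLin (A - P) w := by
      rw [map_sub Matrix.toEuclideanLin A P, LinearMap.sub_apply, ← hp, ← hL, hLw]
    have h2 : ‖Matrix.toEuclideanLin (A - P) w‖ ≤ ε * ‖w‖ := by
      have := (LinearMap.toContinuousLinearMap (Matrix.toEuclideanLin (A - P))).le_opNorm w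
      simpa [hε, specNorm, LinearMap.coe_toContinuousLinearMap'] using this
    rw [h1]
    exact h2.trans (mul_le_mul_of_nonneg_left hwle hε0)
  have hbdd : BddBelow (Set.range fun q : {q : EuclideanSpace ℝ (Fin d) //
      q ∈ Submodule.span ℝ (Set.range (_root_.col P))} => ‖u - q.1‖) := by
    refine ⟨0, ?_⟩
    rintro y ⟨q, rfl⟩
    exact norm_nonneg _
  have hinf : (⨅ q : {q : EuclideanSpace ℝ (Fin d) //
      q ∈ Submodule.span ℝ (Set.range (_root_.col P))}, ‖u - q.1‖) ≤ ‖u - p‖ :=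
    ciInf_le hbdd ⟨p, hpmem⟩
  refine hinf.trans (hdist.trans ?_)
  rw [div_eq_mul_inv]
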